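/- Let P, Q be closed convex cones in ℝⁿ with |𝔰(P,Q)| ≠ 1, where 𝔰(P,Q) = min_{u∈P∩Sₙ} max_{v∈Q∩Sₙ}⟨u,v⟩, and let L be the smallest linear subspace containing P ∪ Q. If ū solves the minimization problem and the nearest-point projection Proj_{Q∩Sₙ}(ū) is a singleton, then ū lies on the boundary of P relative to L. -/

import Mathlib

open Real Set
open scoped ENNReal

noncomputable section

local notation "⟪" x ", " y "⟫" => @inner ℝ _ _ x y

/-- Euclidean space ℝⁿ. -/
abbrev E (n : ℕ) := EuclideanSpace ℝ (Fin n)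

/-- Unit sphere Sₙ in ℝⁿ. -/
def sph (n : ℕ) : Set (E n) := {u | ‖u‖ = 1}

/-- `P` is a closed convex cone in ℝⁿ. -/
def IsClosedConvexCone {n : ℕ} (P : Set (E n)) : Prop :=
  IsClosed P ∧ Convex ℝ P ∧ ∀ c : ℝ, 0 ≤ c → ∀ x ∈ P, c • x ∈ P

/-- Support function of Q ∩ Sₙ : F_Q(u) = max_{v ∈ Q∩Sₙ} ⟨u,v⟩. -/
def F {n : ℕ} (Q : Set (E n)) (u : E n) : ℝ :=
  sSup ((fun v => ⟪u, v⟫) '' (Q ∩ sph n))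

/-- 𝔰(P,Q) := min_{u∈P∩Sₙ} F_Q(u). -/
def sval {n : ℕ} (P Q : Set (E n)) : ℝ := sInf (F Q '' (P ∩ sph n))

/-- The set of nearest points to u in Q ∩ Sₙ. -/
def projSet {n : ℕ} (Q : Set (E n)) (u : E n) : Set (E n) :=
  {v ∈ Q ∩ sph n | ∀ w ∈ Q ∩ sph n, ‖v - u‖ ≤ ‖w - u‖}

set_option maxHeartbeats 1000000 in
/-- if |𝔰(P,Q)| ≠ 1, ū solves the minimization problem and
Proj_{Q∩Sₙ}(ū) is a singleton, then ū lies on the boundary of P relative to the smallest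
linear subspace L containing P and Q (that is, ū is in the closure of P and in the closure
of L \ P). -/
theorem solution_on_relative_boundary {n : ℕ} (P Q : Set (E n))
    (hP : IsClosedConvexCone P) (hQ : IsClosedConvexCone Q)
    (hPne : (P ∩ sph n).Nonempty) (hQne : (Q ∩ sph n).Nonempty)
    (hs : |sval P Q| ≠ 1)
    (u : E n) (hu : u ∈ P ∩ sph n)
    (hmin : IsLeast (F Q '' (P ∩ sph n)) (F Q u))
    (hproj : ∃ v, projSet Q u = {v}) :
    u ∈ closure P ∧
      u ∈ closure ((↑(Submodule.span ℝ (P ∪ Q)) : Set (E n)) \ P) := by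
  obtain ⟨v, hv⟩ := hproj
  have hvmem : v ∈ projSet Q u := by rw [hv]; exact rfl
  obtain ⟨⟨hvQ, hvS⟩, hvnear⟩ := hvmem
  have huS : ‖u‖ = 1 := hu.2
  -- distance vs inner product on the sphere
  have key : ∀ a ∈ sph n, ∀ b ∈ sph n, (‖a - u‖ ≤ ‖b - u‖ ↔ ⟪u, b⟫ ≤ ⟪u, a⟫) := by
    intro a ha b hb
    have ea : ‖a - u‖ ^ 2 = 2 - 2 * ⟪u, a⟫ := by
      rw [norm_sub_sq_real, real_inner_comm]
      rw [show ‖a‖ = 1 from ha, huS]; ring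
    have eb : ‖b - u‖ ^ 2 = 2 - 2 * ⟪u, b⟫ := by
      rw [norm_sub_sq_real, real_inner_comm]
      rw [show ‖b‖ = 1 from hb, huS]; ring
    constructor
    · intro h
      have := pow_le_pow_left₀ (norm_nonneg _) h 2
      rw [ea, eb] at this; linarith
    · intro h
      have h2 : ‖a - u‖ ^ 2 ≤ ‖b - u‖ ^ 2 := by rw [ea, eb]; linarith
      exact le_of_pow_le_pow_left₀ two_ne_zero (norm_nonneg _) h2
  have hmax : ∀ w ∈ Q ∩ sph n, ⟪u, w⟫ ≤ ⟪u, v⟫ :=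
    fun w hw => (key v hvS w hw.2).1 (hvnear w hw)
  have huniq : ∀ w ∈ Q ∩ sph n, (∀ w' ∈ Q ∩ sph n, ⟪u, w'⟫ ≤ ⟪u, w⟫) → w = v := by
    intro w hw hmaxw
    have : w ∈ projSet Q u :=
      ⟨hw, fun w' hw' => (key w hw.2 w' hw'.2).2 (hmaxw w' hw')⟩
    rw [hv] at this; exact this
  have hFu : F Q u = ⟪u, v⟫ := by
    apply IsGreatest.csSup_eq
    exact ⟨⟨v, ⟨hvQ, hvS⟩, rfl⟩, by rintro y ⟨w, hw, rfl⟩; exact hmax w hw⟩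
  refine ⟨subset_closure hu.1, ?_⟩
  by_contra hcl
  rw [Metric.mem_closure_iff] at hcl
  push_neg at hcl
  obtain ⟨ε, hε, hball⟩ := hcl
  set L := Submodule.span ℝ (P ∪ Q) with hL
  have hPL : P ⊆ (L : Set (E n)) := fun x hx => Submodule.subset_span (Or.inl hx)
  have hQL : Q ⊆ (L : Set (E n)) := fun x hx => Submodule.subset_span (Or.inr hx)
  have hballP : ∀ x : E n, x ∈ L → dist u x < ε → x ∈ P := by
    intro x hxL hxd
    by_contra hxP
    exact absurd hxd (not_lt.2 (hball x ⟨hxL, hxP⟩))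
  have hsphc : sph n = Metric.sphere (0 : E n) 1 := by
    ext y; simp [sph, Metric.mem_sphere, dist_zero_right]
  have hcomp : IsCompact (Q ∩ sph n) := by
    rw [hsphc]
    exact (isCompact_sphere (0 : E n) 1).inter_left hQ.1
  -- key claim
  have claim : ∀ d : E n, d ∈ L → ⟪u, d⟫ = 0 → 0 ≤ ⟪d, v⟫ := by
    intro d hdL hud
    set c : ℝ := ε / (2 * (‖d‖ + 1)) with hc
    have hc0 : 0 < c := by positivity
    have hcd : c * ‖d‖ < ε := by
      rw [hc, div_mul_eq_mul_div, div_lt_iff₀ (by positivity)]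
      nlinarith [norm_nonneg d]
    set t : ℕ → ℝ := fun k => c / (k + 1) with ht
    have ht0 : ∀ k, 0 < t k := fun k => by positivity
    have htc : ∀ k, t k ≤ c := by
      intro k
      rw [ht]
      exact div_le_self hc0.le (by exact_mod_cast Nat.one_le_iff_ne_zero.2 (Nat.succ_ne_zero k))
    have htlim : Filter.Tendsto t Filter.atTop (nhds 0) := by
      have h1 := tendsto_one_div_add_atTop_nhds_zero_nat.const_mul c
      simpa [ht, mul_one_div, div_eq_mul_inv] using h1
    set x : ℕ → E n := fun k => u + t k • d with hx
    have hxL : ∀ k, x k ∈ L := fun k => L.add_mem (hPL hu.1) (L.smul_mem _ hdL)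
    have hxP : ∀ k, x k ∈ P := by
      intro k
      refine hballP _ (hxL k) ?_
      rw [dist_eq_norm]
      have : u - x k = -(t k • d) := by rw [hx]; exact sub_add_cancel_left u (t k • d)
      rw [this, norm_neg, norm_smul, Real.norm_eq_abs, abs_of_pos (ht0 k)]
      calc t k * ‖d‖ ≤ c * ‖d‖ := by
            exact mul_le_mul_of_nonneg_right (htc k) (norm_nonneg d)
        _ < ε := hcd
    set r : ℕ → ℝ := fun k => ‖x k‖ with hr
    have hr2 : ∀ k, r k ^ 2 = 1 + t k ^ 2 * ‖d‖ ^ 2 := by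
      intro k
      rw [hr, hx]
      rw [norm_add_sq_real, real_inner_smul_right, hud, norm_smul, Real.norm_eq_abs,
        abs_of_pos (ht0 k), huS]
      ring
    have hr1 : ∀ k, 1 ≤ r k := by
      intro k
      nlinarith [hr2 k, norm_nonneg (x k), sq_nonneg (t k * ‖d‖), sq_nonneg (t k), sq_nonneg ‖d‖,
        mul_nonneg (sq_nonneg (t k)) (sq_nonneg ‖d‖)]
    have hrk0 : ∀ k, 0 < r k := fun k => lt_of_lt_of_le one_pos (hr1 k)
    set uu : ℕ → E n := fun k => (r k)⁻¹ • x k with huu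
    have huuPS : ∀ k, uu k ∈ P ∩ sph n := by
      intro k
      refine ⟨hP.2.2 _ (inv_nonneg.2 (hrk0 k).le) _ (hxP k), ?_⟩
      show ‖(r k)⁻¹ • x k‖ = 1
      rw [norm_smul, Real.norm_eq_abs, abs_of_pos (inv_pos.2 (hrk0 k))]
      exact inv_mul_cancel₀ (ne_of_gt (hrk0 k))
    have hex : ∀ k, ∃ w ∈ Q ∩ sph n, ∀ w' ∈ Q ∩ sph n, ⟪uu k, w'⟫ ≤ ⟪uu k, w⟫ := by
      intro k
      obtain ⟨w, hw, hwmax⟩ := hcomp.exists_isMaxOn hQne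
        ((continuous_const.inner continuous_id).continuousOn :
          ContinuousOn (fun w => ⟪uu k, w⟫) (Q ∩ sph n))
      exact ⟨w, hw, fun w' hw' => hwmax hw'⟩
    choose vv hvvm hvvmax using hex
    have hFuu : ∀ k, F Q (uu k) = ⟪uu k, vv k⟫ := by
      intro k
      apply IsGreatest.csSup_eq
      exact ⟨⟨vv k, hvvm k, rfl⟩, by rintro y ⟨w, hw, rfl⟩; exact hvvmax k w hw⟩
    have hge : ∀ k, ⟪u, v⟫ ≤ ⟪uu k, vv k⟫ := by
      intro k
      rw [← hFuu, ← hFu]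
      exact hmin.2 ⟨uu k, huuPS k, rfl⟩
    have hle : ∀ k, ⟪u, vv k⟫ ≤ ⟪u, v⟫ := fun k => hmax _ (hvvm k)
    have hineq : ∀ k, -(t k * ‖d‖ ^ 2) ≤ ⟪d, vv k⟫ := by
      intro k
      have h1 : ⟪u, vv k⟫ ≤ ⟪uu k, vv k⟫ := (hle k).trans (hge k)
      have h2 : ⟪uu k, vv k⟫ = (r k)⁻¹ * (⟪u, vv k⟫ + t k * ⟪d, vv k⟫) := by
        rw [huu, hx, real_inner_smul_left, inner_add_left, real_inner_smul_left]
      have h3 : -1 ≤ ⟪u, vv k⟫ := by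
        have h := abs_real_inner_le_norm u (vv k)
        rw [huS, (hvvm k).2, one_mul] at h
        linarith [abs_nonneg ⟪u, vv k⟫, neg_abs_le ⟪u, vv k⟫]
      have hr1' := hr1 k
      have hr2' := hr2 k
      have htk := ht0 k
      have hrm1 : r k - 1 ≤ t k ^ 2 * ‖d‖ ^ 2 := by nlinarith
      rw [h2] at h1
      have h4 : r k * ⟪u, vv k⟫ ≤ ⟪u, vv k⟫ + t k * ⟪d, vv k⟫ := by
        have h5 := mul_le_mul_of_nonneg_left h1 (hrk0 k).le
        rwa [← mul_assoc, mul_inv_cancel₀ (ne_of_gt (hrk0 k)), one_mul] at h5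
      have h6 : 0 ≤ (r k - 1) * (⟪u, vv k⟫ + 1) :=
        mul_nonneg (by linarith) (by linarith)
      have h7 : -(t k ^ 2 * ‖d‖ ^ 2) ≤ t k * ⟪d, vv k⟫ := by nlinarith
      nlinarith [h7, htk]
    obtain ⟨w, hwmem, φ, hφ, hvvlim⟩ := hcomp.tendsto_subseq hvvm
    have htlim' : Filter.Tendsto (fun k => t (φ k)) Filter.atTop (nhds 0) :=
      htlim.comp hφ.tendsto_atTop
    have hxlim : Filter.Tendsto x Filter.atTop (nhds u) := by
      have h1 : Filter.Tendsto (fun k => u + t k • d) Filter.atTop (nhds (u + (0 : ℝ) • d)) :=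
        tendsto_const_nhds.add (htlim.smul_const d)
      simpa using h1
    have hrlim : Filter.Tendsto r Filter.atTop (nhds 1) := by
      have := hxlim.norm
      simpa [huS] using this
    have huulim : Filter.Tendsto uu Filter.atTop (nhds u) := by
      have h1 := (hrlim.inv₀ one_ne_zero).smul hxlim
      have h2 : ((1:ℝ))⁻¹ • u = u := by rw [inv_one, one_smul]
      rwa [h2] at h1
    have huulim' : Filter.Tendsto (fun k => uu (φ k)) Filter.atTop (nhds u) :=
      huulim.comp hφ.tendsto_atTop
    have hinnerlim : Filter.Tendsto (fun k => ⟪uu (φ k), vv (φ k)⟫) Filter.atTop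
        (nhds ⟪u, w⟫) := huulim'.inner hvvlim
    have hw1 : ⟪u, v⟫ ≤ ⟪u, w⟫ :=
      le_of_tendsto_of_tendsto' tendsto_const_nhds hinnerlim (fun k => hge (φ k))
    have hwmax : ∀ w' ∈ Q ∩ sph n, ⟪u, w'⟫ ≤ ⟪u, w⟫ :=
      fun w' hw' => (hmax w' hw').trans hw1
    have hwv : w = v := huniq w hwmem hwmax
    have hdlim : Filter.Tendsto (fun k => ⟪d, vv (φ k)⟫) Filter.atTop (nhds ⟪d, v⟫) := by
      rw [← hwv]
      exact tendsto_const_nhds.inner hvvlim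
    have hzlim : Filter.Tendsto (fun k => -(t (φ k) * ‖d‖ ^ 2)) Filter.atTop (nhds 0) := by
      have h1 := (htlim'.mul_const (‖d‖ ^ 2)).neg
      simpa using h1
    exact le_of_tendsto_of_tendsto' hzlim hdlim (fun k => hineq (φ k))
  -- conclude
  set d0 : E n := v - ⟪u, v⟫ • u with hd0
  have hd0L : d0 ∈ L := L.sub_mem (hQL hvQ) (L.smul_mem _ (hPL hu.1))
  have hud0 : ⟪u, d0⟫ = 0 := by
    rw [hd0, inner_sub_right, real_inner_smul_right, real_inner_self_eq_norm_sq, huS]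
    ring
  have h1 : 0 ≤ ⟪d0, v⟫ := claim d0 hd0L hud0
  have h2 : 0 ≤ ⟪-d0, v⟫ := claim (-d0) (L.neg_mem hd0L) (by rw [inner_neg_right, hud0]; ring)
  have hd0v : ⟪d0, v⟫ = 0 := le_antisymm (by rw [inner_neg_left] at h2; linarith) h1
  have hsq : ⟪u, v⟫ ^ 2 = 1 := by
    have e : ⟪d0, v⟫ = ‖v‖ ^ 2 - ⟪u, v⟫ * ⟪u, v⟫ := by
      rw [hd0, inner_sub_left, real_inner_smul_left, real_inner_self_eq_norm_sq,
        real_inner_comm v u]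
    rw [hd0v, hvS] at e
    nlinarith [e]
  have hfac : (⟪u, v⟫ - 1) * (⟪u, v⟫ + 1) = 0 := by nlinarith [hsq]
  have habs : |⟪u, v⟫| = 1 := by
    rcases mul_eq_zero.1 hfac with h | h
    · rw [show ⟪u, v⟫ = 1 by linarith]; norm_num
    · rw [show ⟪u, v⟫ = -1 by linarith]; norm_num
  apply hs
  rw [sval, hmin.csInf_eq, hFu]
  exact habs
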